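/- Let d ∈ ℕ, let G be a finite simple graph admitting a coin model (c, r), and let ⪯ be a Koebe ordering of G with respect to (c, r). Then for every vertex u of G, |SReach_d[u]| ≤ (2d+1)². -/

import Mathlib

open Metric

/-- A coin model of a simple graph `G`: centers `c` and positive radii `r` such that the
open disks are pairwise disjoint and closed disks of adjacent vertices intersect. -/
structure IsCoinModel {V : Type*} (G : SimpleGraph V)
    (c : V → EuclideanSpace ℝ (Fin 2)) (r : V → ℝ) : Prop where
  r_pos : ∀ v, 0 < r v
  disj : ∀ u v, u ≠ v → Disjoint (ball (c u) (r u)) (ball (c v) (r v))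
  touch : ∀ u v, G.Adj u v →
    (closedBall (c u) (r u) ∩ closedBall (c v) (r v)).Nonempty

/-- The set of vertices strongly `d`-reachable from `u`: vertices `w ⪯ u` joined to `u`
by a path of length at most `d` all of whose internal vertices are strictly `≻ u`. -/
def SReach {V : Type*} [LinearOrder V] (G : SimpleGraph V) (d : ℕ) (u : V) : Set V :=
  {w | w ≤ u ∧ ∃ p : G.Walk u w, p.IsPath ∧ p.length ≤ d ∧
    ∀ x ∈ p.support, x ≠ u → x ≠ w → u < x}

section Aux
open MeasureTheory
open scoped ENNReal

/-- Inside a closed ball of radius `R ≥ ρ`, any point `pt` of the ball admits a point `q`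
at distance at most `ρ` from `pt` and at distance at most `R - ρ` from the center. -/
lemma koebe_exists_point (x pt : EuclideanSpace ℝ (Fin 2)) (R ρ : ℝ) (hρ : 0 ≤ ρ)
    (hρR : ρ ≤ R) (h : dist pt x ≤ R) :
    ∃ q : EuclideanSpace ℝ (Fin 2), dist q x ≤ R - ρ ∧ dist q pt ≤ ρ := by
  by_cases h' : dist pt x ≤ R - ρ
  · exact ⟨pt, h', by simpa using hρ⟩
  · push_neg at h'
    set D := dist pt x with hD
    have hD0 : 0 ≤ R - ρ := sub_nonneg.mpr hρR
    have hDpos : 0 < D := lt_of_le_of_lt hD0 h'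
    set t : ℝ := (D - (R - ρ)) / D with ht
    have ht0 : 0 ≤ t := div_nonneg (by linarith) hDpos.le
    have ht1 : t ≤ 1 := by
      rw [div_le_one hDpos]; linarith
    refine ⟨pt + t • (x - pt), ?_, ?_⟩
    · have hx : x - (pt + t • (x - pt)) = (1 - t) • (x - pt) := by
        rw [sub_smul, one_smul]; abel
      rw [dist_eq_norm, ← neg_sub, norm_neg, hx, norm_smul, Real.norm_eq_abs,
        abs_of_nonneg (by linarith)]
      have : ‖x - pt‖ = D := by rw [hD, dist_eq_norm, ← neg_sub, norm_neg]
      rw [this, ht]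
      field_simp
      linarith
    · have hq : pt + t • (x - pt) - pt = t • (x - pt) := by abel
      rw [dist_eq_norm, hq, norm_smul, Real.norm_eq_abs, abs_of_nonneg ht0]
      have : ‖x - pt‖ = D := by rw [hD, dist_eq_norm, ← neg_sub, norm_neg]
      rw [this, ht]
      rw [div_mul_cancel₀ _ hDpos.ne']
      linarith

lemma koebe_center_dist_le {V : Type*} {G : SimpleGraph V} {c : V → EuclideanSpace ℝ (Fin 2)}
    {r : V → ℝ} (hcm : IsCoinModel G c r) {a b : V} (hab : G.Adj a b) :
    dist (c a) (c b) ≤ r a + r b := by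
  obtain ⟨p, hpa, hpb⟩ := hcm.touch a b hab
  calc dist (c a) (c b) ≤ dist (c a) p + dist p (c b) := dist_triangle _ _ _
  _ ≤ r a + r b := add_le_add (by simpa [dist_comm] using hpa) (by simpa [dist_comm] using hpb)

/-- Along a walk whose vertices (except possibly the endpoint) have radius at most `ρ`,
there is a point of the final disk at distance at most `(2·len − 1)·ρ` from the start center. -/
lemma koebe_walk_close {V : Type*} {G : SimpleGraph V} {c : V → EuclideanSpace ℝ (Fin 2)}
    {r : V → ℝ} (hcm : IsCoinModel G c r) (ρ : ℝ) :
    ∀ {a w : V} (p : G.Walk a w), a ≠ w → r a ≤ ρ →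
      (∀ x ∈ p.support, x ≠ w → r x ≤ ρ) →
      ∃ pt ∈ closedBall (c w) (r w), dist (c a) pt ≤ (2 * p.length - 1) * ρ := by
  intro a w p
  induction p with
  | nil => intro hne _ _; exact absurd rfl hne
  | @cons a b w hadj q ih =>
    intro _ hra hsup
    have hρ : 0 ≤ ρ := le_trans (hcm.r_pos a).le hra
    by_cases hbw : b = w
    · subst hbw
      obtain ⟨pt, hpa, hpb⟩ := hcm.touch a b hadj
      refine ⟨pt, hpb, ?_⟩
      have h1 : dist (c a) pt ≤ r a := by simpa [dist_comm] using hpa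
      have h2 : (1 : ℝ) * ρ ≤ (2 * (q.length + 1) - 1) * ρ := by
        apply mul_le_mul_of_nonneg_right _ hρ
        have : (0:ℝ) ≤ (q.length : ℝ) := Nat.cast_nonneg _
        linarith
      calc dist (c a) pt ≤ r a := h1
        _ ≤ ρ := hra
        _ = 1 * ρ := (one_mul ρ).symm
        _ ≤ (2 * (q.length + 1) - 1) * ρ := h2
        _ = (2 * (q.length + 1 : ℕ) - 1) * ρ := by push_cast; ring_nf
    · have hrb : r b ≤ ρ := hsup b (by simp [SimpleGraph.Walk.support_cons]) hbw
      obtain ⟨pt, hpt, hdist⟩ := ih hbw hrb (fun x hx hxw =>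
        hsup x (by simp [SimpleGraph.Walk.support_cons, hx]) hxw)
      refine ⟨pt, hpt, ?_⟩
      have h0 : dist (c a) (c b) ≤ r a + r b := koebe_center_dist_le hcm hadj
      calc dist (c a) pt ≤ dist (c a) (c b) + dist (c b) pt := dist_triangle _ _ _
        _ ≤ (r a + r b) + (2 * q.length - 1) * ρ := add_le_add h0 hdist
        _ ≤ (2 * ρ) + (2 * q.length - 1) * ρ := by linarith
        _ = (2 * (q.length + 1 : ℕ) - 1) * ρ := by push_cast; ring

/-- Area packing bound: disjoint open disks of radius `ρ` contained in a closed disk of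
radius `R` are at most `R²/ρ²` many. -/
lemma koebe_packing {V : Type*} (s : Finset V) (F : V → EuclideanSpace ℝ (Fin 2)) (ρ R : ℝ)
    (hρ : 0 < ρ) (hR : 0 ≤ R) (x : EuclideanSpace ℝ (Fin 2))
    (hdisj : ∀ a ∈ s, ∀ b ∈ s, a ≠ b → Disjoint (ball (F a) ρ) (ball (F b) ρ))
    (hsub : ∀ a ∈ s, ball (F a) ρ ⊆ closedBall x R) :
    (s.card : ℝ) * ρ ^ 2 ≤ R ^ 2 := by
  set μ : Measure (EuclideanSpace ℝ (Fin 2)) := volume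
  set B : ℝ≥0∞ := μ (ball (0 : EuclideanSpace ℝ (Fin 2)) 1) with hB
  have hBpos : B ≠ 0 := (measure_ball_pos μ _ one_pos).ne'
  have hBfin : B ≠ ⊤ := measure_ball_lt_top.ne
  have hfr : Module.finrank ℝ (EuclideanSpace ℝ (Fin 2)) = 2 := by simp
  have hvol : ∀ a : V, μ (ball (F a) ρ) = ENNReal.ofReal (ρ ^ 2) * B := by
    intro a
    rw [Measure.addHaar_ball μ (F a) hρ.le, hfr]
  have hvolC : μ (closedBall x R) = ENNReal.ofReal (R ^ 2) * B := by
    rw [Measure.addHaar_closedBall μ x hR, hfr]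
  have h1 : ∑ a ∈ s, μ (ball (F a) ρ) = μ (⋃ a ∈ s, ball (F a) ρ) := by
    rw [measure_biUnion_finset ?_ (fun b _ => measurableSet_ball)]
    intro a ha b hb hab
    exact hdisj a ha b hb hab
  have h2 : μ (⋃ a ∈ s, ball (F a) ρ) ≤ μ (closedBall x R) := by
    apply measure_mono
    exact Set.iUnion₂_subset hsub
  have h3 : (s.card : ℝ≥0∞) * (ENNReal.ofReal (ρ ^ 2) * B) ≤ ENNReal.ofReal (R ^ 2) * B := by
    calc (s.card : ℝ≥0∞) * (ENNReal.ofReal (ρ ^ 2) * B)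
        = ∑ _a ∈ s, (ENNReal.ofReal (ρ ^ 2) * B) := by rw [Finset.sum_const, nsmul_eq_mul]
      _ = ∑ a ∈ s, μ (ball (F a) ρ) := by simp [hvol]
      _ ≤ μ (closedBall x R) := h1 ▸ h2
      _ = ENNReal.ofReal (R ^ 2) * B := hvolC
  rw [← mul_assoc] at h3
  have h4 : (s.card : ℝ≥0∞) * ENNReal.ofReal (ρ ^ 2) ≤ ENNReal.ofReal (R ^ 2) :=
    (ENNReal.mul_le_mul_iff_left hBpos hBfin).mp h3
  have h5 : ENNReal.ofReal ((s.card : ℝ) * ρ ^ 2) ≤ ENNReal.ofReal (R ^ 2) := by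
    rw [ENNReal.ofReal_mul (Nat.cast_nonneg _)]
    simpa [ENNReal.ofReal_natCast] using h4
  exact (ENNReal.ofReal_le_ofReal_iff (by positivity)).mp h5

end Aux

/-- For any Koebe ordering of a graph with a coin model,
`|SReach_d[u]| ≤ (2d+1)²` for every vertex `u`. -/
theorem koebe_sreach_upper_bound (d : ℕ) (V : Type) [Fintype V] [LinearOrder V]
    (G : SimpleGraph V) (c : V → EuclideanSpace ℝ (Fin 2)) (r : V → ℝ)
    (hcm : IsCoinModel G c r) (hko : ∀ a b : V, r b < r a → a ≤ b) (u : V) :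
    (SReach G d u).ncard ≤ (2 * d + 1) ^ 2 := by
  classical
  set S : Set V := SReach G d u with hS
  set ρ : ℝ := r u with hρdef
  have hρpos : 0 < ρ := hcm.r_pos u
  have key : ∀ w : V, ∃ q : EuclideanSpace ℝ (Fin 2), w ∈ S →
      ball q ρ ⊆ ball (c w) (r w) ∧ ball q ρ ⊆ closedBall (c u) ((2 * (d : ℝ) + 1) * ρ) := by
    intro w
    by_cases hwS : w ∈ S
    · by_cases hwu : w = u
      · subst hwu
        refine ⟨c w, fun _ => ⟨subset_rfl, ?_⟩⟩
        refine (ball_subset_closedBall).trans (closedBall_subset_closedBall ?_)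
        nlinarith [Nat.cast_nonneg (α := ℝ) d]
      · obtain ⟨hle, p, hpath, hlen, hint⟩ := hwS
        have hrw : ρ ≤ r w := by
          by_contra h
          push_neg at h
          exact hwu (le_antisymm hle (hko u w h))
        have hsup : ∀ x ∈ p.support, x ≠ w → r x ≤ ρ := by
          intro x hx hxw
          by_cases hxu : x = u
          · subst hxu; exact le_refl _
          · have hux : u < x := hint x hx hxu hxw
            by_contra h
            push_neg at h
            exact absurd (hko x u h) (not_le.mpr hux)
        obtain ⟨pt, hpt, hptd⟩ :=
          koebe_walk_close hcm ρ p (fun h => hwu h.symm) (le_refl ρ) hsup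
        obtain ⟨q, hq1, hq2⟩ :=
          koebe_exists_point (c w) pt (r w) ρ hρpos.le hrw (mem_closedBall.mp hpt)
        refine ⟨q, fun _ => ⟨?_, ?_⟩⟩
        · intro y hy
          rw [mem_ball] at hy ⊢
          have := dist_triangle y q (c w)
          linarith
        · intro y hy
          rw [mem_ball] at hy
          rw [mem_closedBall]
          have t1 := dist_triangle y q pt
          have t2 := dist_triangle y pt (c u)
          have hc : dist pt (c u) = dist (c u) pt := dist_comm _ _
          have hlen' : (p.length : ℝ) ≤ (d : ℝ) := Nat.cast_le.mpr hlen
          have hmono : (2 * (p.length : ℝ) - 1) * ρ ≤ (2 * (d : ℝ) - 1) * ρ :=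
            mul_le_mul_of_nonneg_right (by linarith) hρpos.le
          linarith
    · exact ⟨c w, fun h => absurd h hwS⟩
  choose F hF using key
  have hcard : ((S.toFinset.card : ℝ)) * ρ ^ 2 ≤ ((2 * (d : ℝ) + 1) * ρ) ^ 2 := by
    refine koebe_packing S.toFinset F ρ ((2 * (d : ℝ) + 1) * ρ) hρpos (by positivity) (c u)
      ?_ ?_
    · intro a ha b hb hab
      rw [Set.mem_toFinset] at ha hb
      exact ((hcm.disj a b hab).mono (hF a ha).1 (hF b hb).1)
    · intro a ha
      rw [Set.mem_toFinset] at ha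
      exact (hF a ha).2
  have hfin : (S.toFinset.card : ℝ) ≤ (2 * (d : ℝ) + 1) ^ 2 := by
    have hρ2 : 0 < ρ ^ 2 := by positivity
    rw [mul_pow] at hcard
    exact le_of_mul_le_mul_right hcard hρ2
  have hnat : S.toFinset.card ≤ (2 * d + 1) ^ 2 := by exact_mod_cast hfin
  rwa [hS, ← Set.ncard_eq_toFinset_card' (SReach G d u)] at hnat
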